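/- Let Y be a real random variable with finite nonzero fourth moment, mean m, variance v > 0, kurtosis κ = E[(Y − m)⁴]/v², and uniform kurtosis c = sup_{θ ∈ ℝ} E[(Y − θ)⁴]/(E[(Y − θ)²])². Then κ ≤ c ≤ (1/9)(√κ + 2√(κ + 3))² ≤ κ + 2. -/
import Mathlib


open MeasureTheory ProbabilityTheory

set_option maxHeartbeats 1000000

private lemma kurt_alg1 (a b : ℝ) (ha : 1 ≤ a) (hb : 0 ≤ b) (hb2 : b^2 = a^2+3) :
    (2*a^2*(1/9*(a+2*b)^2) - a^2*(6+2*a^2))^2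
      ≤ 4*(a^2*(1/9*(a+2*b)^2-1))*(a^2*(1/9*(a+2*b)^2) - ((a^2)^2+2*a^2-2)) := by
  set d : ℝ := a*b - a^2 with hdd
  have ha0 : (0:ℝ) < a := lt_of_lt_of_le one_pos ha
  have hba : a ≤ b := by nlinarith
  have hd0 : 0 < d := by nlinarith
  have h32 : (3 - 2*d)*a^2 = d^2 := by
    have : a^2*b^2 = a^4 + 3*a^2 := by nlinarith [hb2]
    nlinarith [this]
  have h32p : 0 < 3 - 2*d := by nlinarith [sq_nonneg a, sq_nonneg d, h32, mul_pos hd0 hd0]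
  have hp : 0 ≤ -18*d^4+108*d^3-225*d^2+108*d+162 := by
    nlinarith [mul_nonneg hd0.le h32p.le, sq_nonneg (d*(3-2*d)), mul_nonneg (mul_nonneg hd0.le hd0.le) h32p.le, mul_nonneg (mul_nonneg (mul_nonneg hd0.le hd0.le) hd0.le) h32p.le, sq_nonneg (d-1), mul_nonneg hd0.le (sq_nonneg (d-1)), mul_nonneg h32p.le (sq_nonneg (d-1)), mul_nonneg (mul_nonneg hd0.le h32p.le) (sq_nonneg (d-1))]
  have hkey : (18*(2*d-3)*a^4 + 27*(4*d-3)*a^2 + 72*d + 54) * (3-2*d)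
      = -18*d^4+108*d^3-225*d^2+108*d+162 := by
    linear_combination (-18*((3-2*d)*a^2+d^2) + 27*(4*d-3)) * h32
  have hDiff : 0 ≤ 18*(2*d-3)*a^4 + 27*(4*d-3)*a^2 + 72*d + 54 := by
    nlinarith [hkey, hp, h32p]
  have hDiff' : 0 ≤ 18*(2*(a*b-a^2)-3)*a^4 + 27*(4*(a*b-a^2)-3)*a^2 + 72*(a*b-a^2) + 54 := by
    rw [← hdd]; exact hDiff
  have hE : (a+2*b)^2 = 5*a^2+4*a*b+12 := by linear_combination 4*hb2
  rw [hE]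
  nlinarith [mul_nonneg (sq_nonneg a) hDiff']

private lemma kurt_alg3 (a b : ℝ) (hb2 : b^2 = a^2+3) :
    1/9 * (a + 2*b)^2 ≤ a^2 + 2 := by
  nlinarith [sq_nonneg (2*a^2 + 3 - 2*a*b), sq_nonneg (a-b)]

/-- Lemma (comparison of the kurtosis `κ` and the uniform kurtosis `c`):
`κ ≤ c ≤ (1/9)(√κ + 2√(κ + 3))² ≤ κ + 2`. -/
theorem kurtosis_uniform_kurtosis_comparison
    {Ω : Type*} [MeasurableSpace Ω] (P : Measure Ω) [IsProbabilityMeasure P]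
    (Y : Ω → ℝ) (hY : Measurable Y)
    (hL4 : Integrable (fun ω => (Y ω) ^ 4) P)
    (m v κ c : ℝ)
    (hm : m = ∫ ω, Y ω ∂P)
    (hv : v = ∫ ω, (Y ω - m) ^ 2 ∂P) (hvpos : 0 < v)
    (hκ : κ = (∫ ω, (Y ω - m) ^ 4 ∂P) / v ^ 2)
    (hc : c = ⨆ θ : ℝ, (∫ ω, (Y ω - θ) ^ 4 ∂P) / (∫ ω, (Y ω - θ) ^ 2 ∂P) ^ 2) :
    κ ≤ c ∧
    c ≤ (1 / 9) * (Real.sqrt κ + 2 * Real.sqrt (κ + 3)) ^ 2 ∧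
    (1 / 9) * (Real.sqrt κ + 2 * Real.sqrt (κ + 3)) ^ 2 ≤ κ + 2 := by
  have hvne : v ≠ 0 := ne_of_gt hvpos
  -- Integrability of powers of Y
  have iY1 : Integrable Y P := by
    refine (hL4.add (integrable_const 1)).mono' hY.aestronglyMeasurable
      (Filter.Eventually.of_forall fun ω => ?_)
    have h4 : |Y ω|^4 = Y ω^4 := by
      rw [pow_abs, abs_of_nonneg (by positivity : (0:ℝ) ≤ Y ω^4)]
    rw [Real.norm_eq_abs]
    simp only [Pi.add_apply]
    nlinarith [sq_nonneg (|Y ω|^2 - 1/2), sq_nonneg (|Y ω| - 1/2), h4]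
  have iY2 : Integrable (fun ω => Y ω ^ 2) P := by
    refine (hL4.add (integrable_const 1)).mono' ((hY.pow_const 2).aestronglyMeasurable)
      (Filter.Eventually.of_forall fun ω => ?_)
    rw [Real.norm_eq_abs, abs_of_nonneg (by positivity : (0:ℝ) ≤ Y ω^2)]
    simp only [Pi.add_apply]
    nlinarith [sq_nonneg (Y ω^2 - 1), sq_nonneg (Y ω)]
  have iY3 : Integrable (fun ω => Y ω ^ 3) P := by
    refine (hL4.add (integrable_const 1)).mono' ((hY.pow_const 3).aestronglyMeasurable)
      (Filter.Eventually.of_forall fun ω => ?_)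
    have h4 : |Y ω|^4 = Y ω^4 := by
      rw [pow_abs, abs_of_nonneg (by positivity : (0:ℝ) ≤ Y ω^4)]
    rw [Real.norm_eq_abs, ← pow_abs]
    simp only [Pi.add_apply]
    nlinarith [sq_nonneg (|Y ω|^2 - |Y ω|), sq_nonneg (|Y ω|^2 - 1/2), h4]
  -- integrability of shifted powers
  have iS1 : ∀ θ : ℝ, Integrable (fun ω => Y ω - θ) P := fun θ => iY1.sub (integrable_const θ)
  have iS2 : ∀ θ : ℝ, Integrable (fun ω => (Y ω - θ)^2) P := by
    intro θ
    have h : Integrable (fun ω => Y ω^2 + (-2*θ)*Y ω + θ^2) P :=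
      (iY2.add (iY1.const_mul _)).add (integrable_const _)
    exact h.congr (Filter.Eventually.of_forall fun ω => by ring)
  have iS3 : ∀ θ : ℝ, Integrable (fun ω => (Y ω - θ)^3) P := by
    intro θ
    have h : Integrable (fun ω => Y ω^3 + (-3*θ)*Y ω^2 + (3*θ^2)*Y ω + (-θ^3)) P :=
      ((iY3.add (iY2.const_mul _)).add (iY1.const_mul _)).add (integrable_const _)
    exact h.congr (Filter.Eventually.of_forall fun ω => by ring)
  have iS4 : ∀ θ : ℝ, Integrable (fun ω => (Y ω - θ)^4) P := by
    intro θ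
    have h : Integrable (fun ω => Y ω^4 + (-4*θ)*Y ω^3 + (6*θ^2)*Y ω^2 + (-4*θ^3)*Y ω + θ^4) P :=
      (((hL4.add (iY3.const_mul _)).add (iY2.const_mul _)).add (iY1.const_mul _)).add
        (integrable_const _)
    exact h.congr (Filter.Eventually.of_forall fun ω => by ring)
  -- basic moments
  have hIX : ∫ ω, (Y ω - m) ∂P = 0 := by
    rw [integral_sub iY1 (integrable_const m), integral_const]
    simp [measure_univ]
    linarith [hm]
  have hIX4 : ∫ ω, (Y ω - m)^4 ∂P = κ * v^2 := by
    rw [hκ]; field_simp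
  set s : ℝ := ∫ ω, (Y ω - m)^3 ∂P with hs
  -- general polynomial integral
  have hpoly : ∀ c4 c3 c2 c1 c0 : ℝ,
      ∫ ω, (c4*(Y ω - m)^4 + c3*(Y ω - m)^3 + c2*(Y ω - m)^2 + c1*(Y ω - m) + c0) ∂P
        = c4*(κ*v^2) + c3*s + c2*v + c0 := by
    intro c4 c3 c2 c1 c0
    have I4 : Integrable (fun ω => c4*(Y ω - m)^4) P := (iS4 m).const_mul c4
    have I3 : Integrable (fun ω => c3*(Y ω - m)^3) P := (iS3 m).const_mul c3
    have I2 : Integrable (fun ω => c2*(Y ω - m)^2) P := (iS2 m).const_mul c2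
    have I1 : Integrable (fun ω => c1*(Y ω - m)) P := (iS1 m).const_mul c1
    have I43 : Integrable (fun ω => c4*(Y ω - m)^4 + c3*(Y ω - m)^3) P := I4.add I3
    have I432 : Integrable (fun ω => c4*(Y ω - m)^4 + c3*(Y ω - m)^3 + c2*(Y ω - m)^2) P :=
      I43.add I2
    have I4321 : Integrable (fun ω => c4*(Y ω - m)^4 + c3*(Y ω - m)^3 + c2*(Y ω - m)^2
        + c1*(Y ω - m)) P := I432.add I1
    rw [integral_add I4321 (integrable_const c0),
      integral_add I432 I1,
      integral_add I43 I2,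
      integral_add I4 I3,
      integral_const_mul, integral_const_mul, integral_const_mul, integral_const_mul,
      integral_const, hIX4, hIX, ← hv, ← hs]
    simp [measure_univ]
  -- κ ≥ 1
  have hκ1 : 1 ≤ κ := by
    have h0 : (0:ℝ) ≤ ∫ ω, (1*(Y ω - m)^4 + 0*(Y ω - m)^3 + (-2*v)*(Y ω - m)^2
        + 0*(Y ω - m) + v^2) ∂P := by
      apply integral_nonneg
      intro ω
      simp only [Pi.zero_apply]
      nlinarith [sq_nonneg ((Y ω - m)^2 - v)]
    rw [hpoly] at h0
    nlinarith [h0, mul_pos hvpos hvpos]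
  have hκpos : (0:ℝ) < κ := by linarith
  -- skewness bound : s² ≤ (κ-1) v³
  have hGen : ∀ l : ℝ, 0 ≤ v*(l*l) + (-2*s)*l + (κ*v^2 - v^2) := by
    intro l
    have h0 : (0:ℝ) ≤ ∫ ω, (1*(Y ω - m)^4 + (-2*l)*(Y ω - m)^3 + (l^2 - 2*v)*(Y ω - m)^2
        + (2*l*v)*(Y ω - m) + v^2) ∂P := by
      apply integral_nonneg
      intro ω
      simp only [Pi.zero_apply]
      nlinarith [sq_nonneg ((Y ω - m)^2 - l*(Y ω - m) - v)]
    rw [hpoly] at h0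
    nlinarith [h0]
  have hs2 : s^2 ≤ (κ-1)*v^3 := by
    have hd := discrim_le_zero hGen
    rw [discrim] at hd
    nlinarith [hd]
  -- integrals at shifted points
  have hint2 : ∀ θ : ℝ, ∫ ω, (Y ω - θ)^2 ∂P = v + (m-θ)^2 := by
    intro θ
    have e : ∀ ω, (Y ω - θ)^2 = 0*(Y ω - m)^4 + 0*(Y ω - m)^3 + 1*(Y ω - m)^2
        + (2*(m-θ))*(Y ω - m) + (m-θ)^2 := fun ω => by ring
    simp only [e]
    rw [hpoly]; ring
  have hint4 : ∀ θ : ℝ, ∫ ω, (Y ω - θ)^4 ∂P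
      = κ*v^2 + 4*(m-θ)*s + 6*v*(m-θ)^2 + (m-θ)^4 := by
    intro θ
    have e : ∀ ω, (Y ω - θ)^4 = 1*(Y ω - m)^4 + (4*(m-θ))*(Y ω - m)^3
        + (6*(m-θ)^2)*(Y ω - m)^2 + (4*(m-θ)^3)*(Y ω - m) + (m-θ)^4 := fun ω => by ring
    simp only [e]
    rw [hpoly]; ring
  -- square-root facts
  have hκ0 : (0:ℝ) ≤ κ := by linarith
  set a : ℝ := Real.sqrt κ with haa
  set b : ℝ := Real.sqrt (κ + 3) with hbb
  set M : ℝ := 1 / 9 * (a + 2 * b) ^ 2 with hM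
  have ha2 : a^2 = κ := Real.sq_sqrt hκ0
  have hb2 : b^2 = a^2 + 3 := by rw [ha2]; exact Real.sq_sqrt (by linarith)
  have ha0 : 0 ≤ a := Real.sqrt_nonneg _
  have hb0 : 0 ≤ b := Real.sqrt_nonneg _
  have ha1 : 1 ≤ a := by nlinarith [ha2, hκ1]
  have hb2' : 2 ≤ b := by nlinarith [hb2, ha1]
  have hM1 : 1 < M := by
    have h5 : 5 ≤ a + 2*b := by linarith
    nlinarith [h5]
  have hdiscκ : (2*κ*M - κ*(6+2*κ))^2
      ≤ 4*(κ*(M-1))*(κ*M - (κ^2+2*κ-2)) := by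
    have h := kurt_alg1 a b ha1 hb0 hb2
    rw [← hM] at h
    rw [ha2] at h
    exact h
  -- main bound for every θ
  have key : ∀ θ : ℝ, (∫ ω, (Y ω - θ)^4 ∂P) / (∫ ω, (Y ω - θ)^2 ∂P)^2 ≤ M := by
    intro θ
    rw [hint2 θ, hint4 θ]
    set t : ℝ := m - θ with ht
    have hden : (0:ℝ) < (v + t^2)^2 := by positivity
    rw [div_le_iff₀ hden]
    have step1 : κ*v*(κ*v^2 + 4*t*s + 6*v*t^2 + t^4)
        ≤ (κ^2+2*κ-2)*v^3 + (6*κ+2*κ^2)*v^2*t^2 + κ*v*t^4 := by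
      nlinarith [sq_nonneg (s - κ*v*t), hs2]
    have hq1 : (0:ℝ) < κ*(M-1) := mul_pos hκpos (by linarith)
    have hprod : (0:ℝ) ≤ (4*(κ*(M-1))*(κ*M-(κ^2+2*κ-2)) - (2*κ*M-(6*κ+2*κ^2))^2) * v^2 :=
      mul_nonneg (by nlinarith [hdiscκ]) (sq_nonneg v)
    have step2 : (κ^2+2*κ-2)*v^2 + (6*κ+2*κ^2)*v*t^2 + κ*t^4 ≤ κ*M*(v+t^2)^2 := by
      nlinarith [hq1, hprod, sq_nonneg (2*(κ*(M-1))*t^2 + (2*κ*M-(6*κ+2*κ^2))*v)]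
    have hcv : (0:ℝ) < κ*v := mul_pos hκpos hvpos
    have final : κ*v*(κ*v^2 + 4*t*s + 6*v*t^2 + t^4) ≤ κ*v*(M*(v+t^2)^2) := by
      nlinarith [step1, mul_le_mul_of_nonneg_left step2 hvpos.le]
    exact le_of_mul_le_mul_left final hcv
  -- value at θ = m
  have hfm : (∫ ω, (Y ω - m)^4 ∂P) / (∫ ω, (Y ω - m)^2 ∂P)^2 = κ := by
    rw [hIX4, hint2 m, sub_self]
    norm_num
    field_simp
  have hbdd : BddAbove (Set.range fun θ : ℝ =>
      (∫ ω, (Y ω - θ)^4 ∂P) / (∫ ω, (Y ω - θ)^2 ∂P)^2) := by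
    refine ⟨M, ?_⟩
    rintro x ⟨θ, rfl⟩
    exact key θ
  refine ⟨?_, ?_, ?_⟩
  · rw [hc]
    calc κ = (∫ ω, (Y ω - m)^4 ∂P) / (∫ ω, (Y ω - m)^2 ∂P)^2 := hfm.symm
      _ ≤ _ := le_ciSup hbdd m
  · rw [hc]
    exact ciSup_le key
  · have h3 := kurt_alg3 a b hb2
    rw [ha2] at h3
    exact h3
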